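/- Let R ⊆ ℝ be any set (the set of representable numbers), let D ⊆ ℝ, and let f : D → ℝ. Suppose that for every ε > 0 and every x ∈ D there exist α, β ∈ R with α ≤ x ≤ β, [α, β] ⊆ D, and |f(y) − f(z)| ≤ ε for all y, z ∈ [α, β]. Then f is continuous (as a function on D) at every point x ∈ D \ R. -/
import Mathlib


/-- A w-IAC function is continuous at every non-representable point: if every point of the
domain `D` lies, for each `ε > 0`, in a closed interval with endpoints in `R`, contained in
`D`, on which the oscillation of `f` is at most `ε`, then `f` is continuous (within `D`)
at every point of `D \ R`. -/
theorem wIAC_continuous_at_nonrepresentable (R D : Set ℝ) (f : ℝ → ℝ)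
    (h : ∀ ε : ℝ, 0 < ε → ∀ x ∈ D, ∃ α β : ℝ, α ∈ R ∧ β ∈ R ∧
      α ≤ x ∧ x ≤ β ∧ Set.Icc α β ⊆ D ∧
      ∀ y ∈ Set.Icc α β, ∀ z ∈ Set.Icc α β, |f y - f z| ≤ ε) :
    ∀ x ∈ D \ R, ContinuousWithinAt f D x := by
  intro x hx
  obtain ⟨hxD, hxR⟩ := hx
  rw [Metric.continuousWithinAt_iff]
  intro ε hε
  obtain ⟨α, β, hαR, hβR, hαx, hxβ, hsub, hosc⟩ := h (ε / 2) (by linarith) x hxD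
  have hαlt : α < x := lt_of_le_of_ne hαx (fun hh => hxR (hh ▸ hαR))
  have hltβ : x < β := lt_of_le_of_ne hxβ (fun hh => hxR (hh ▸ hβR))
  refine ⟨min (x - α) (β - x), by simp [hαlt, hltβ], ?_⟩
  intro y _ hy
  have h1 : |y - x| < x - α := lt_of_lt_of_le hy (min_le_left _ _)
  have h2 : |y - x| < β - x := lt_of_lt_of_le hy (min_le_right _ _)
  rw [abs_lt] at h1 h2
  have hyI : y ∈ Set.Icc α β := ⟨by linarith, by linarith⟩
  have hxI : x ∈ Set.Icc α β := ⟨hαx, hxβ⟩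
  calc |f y - f x| ≤ ε / 2 := hosc y hyI x hxI
    _ < ε := by linarith
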